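/- arXiv:2401.07925 — 2 statements merged into one kernel-verified Lean document; each statement's English description precedes it below -/
import Mathlib

section
/- Let p be an odd prime and f₁, f₂ : F_p → ℂ. With T(f₁,f₂)(s) = ∑_{n≠s} f₁(s−n) f₂(n) K(s−n,n), one has ‖T(f₁,f₂)‖₂² ≤ p^{-1/2}‖f₁‖₂²‖f₂‖₂² + ‖f₂‖₂² · |Λ₁(f₁)|^{1/2}, where Λ₁(f) = ∑_{s₁,s₂,n₁,n₂ : n₁≠s₁, n₁≠s₂} f(s₁−n₁) conj(f(s₂−n₁)) conj(f(s₁−n₂)) f(s₂−n₂) K(s₁−n₁,n₁) conj(K(s₁−n₂,n₂)) conj(K(s₂−n₁,n₁)) K(s₂−n₂,n₂). -/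
open Finset Complex

/-- `e_p(x) = exp(-2πi x / p)` via the canonical lift `x.val`. -/
noncomputable def ep (p : ℕ) (x : ZMod p) : ℂ :=
  Complex.exp (-2 * Real.pi * Complex.I * (x.val : ℂ) / p)

/-- Normalized quadratic Gauss sum kernel `K(a,b) = (1/p) ∑_y e_p(a y² + b y)`. -/
noncomputable def Kker (p : ℕ) [NeZero p] (a b : ZMod p) : ℂ :=
  (p : ℂ)⁻¹ * ∑ y : ZMod p, ep p (a * y ^ 2 + b * y)

/-- `‖f‖₂² = ∑_x |f x|²`. -/
noncomputable def nsq (p : ℕ) [NeZero p] (f : ZMod p → ℂ) : ℝ :=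
  ∑ x : ZMod p, ‖f x‖ ^ 2

/-- The bilinear operator `T(f₁,f₂)(s) = ∑_{n ≠ s} f₁(s−n) f₂(n) K(s−n,n)`. -/
noncomputable def Tbil (p : ℕ) [NeZero p] (f₁ f₂ : ZMod p → ℂ) (s : ZMod p) : ℂ :=
  ∑ n ∈ Finset.univ.filter (fun n => n ≠ s), f₁ (s - n) * f₂ n * Kker p (s - n) n

/-- `Λ₁(f)`: the fourfold sum over `s₁,s₂,n₁,n₂` with `n₁ ≠ s₁` and `n₁ ≠ s₂`. -/
noncomputable def Lambda1 (p : ℕ) [NeZero p] (f : ZMod p → ℂ) : ℂ :=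
  ∑ s₁ : ZMod p, ∑ s₂ : ZMod p, ∑ n₂ : ZMod p,
    ∑ n₁ ∈ Finset.univ.filter (fun n₁ => n₁ ≠ s₁ ∧ n₁ ≠ s₂),
      f (s₁ - n₁) * (starRingEnd ℂ) (f (s₂ - n₁)) * (starRingEnd ℂ) (f (s₁ - n₂)) *
        f (s₂ - n₂) * Kker p (s₁ - n₁) n₁ * (starRingEnd ℂ) (Kker p (s₁ - n₂) n₂) *
        (starRingEnd ℂ) (Kker p (s₂ - n₁) n₁) * Kker p (s₂ - n₂) n₂


noncomputable def epn (p m : ℕ) : ℂ := Complex.exp (-2 * Real.pi * Complex.I * m / p)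

lemma epn_add (p m n : ℕ) : epn p (m + n) = epn p m * epn p n := by
  rw [epn, epn, epn, ← Complex.exp_add]
  congr 1
  push_cast
  ring

lemma epn_mul_p (p k : ℕ) (hp : p ≠ 0) : epn p (p * k) = 1 := by
  rw [epn]
  have hpc : (p : ℂ) ≠ 0 := Nat.cast_ne_zero.mpr hp
  have : (-2 * Real.pi * Complex.I * ((p * k : ℕ) : ℂ) / p) = ((-k : ℤ) : ℂ) * (2 * Real.pi * Complex.I) := by
    push_cast
    field_simp
  rw [this, Complex.exp_int_mul_two_pi_mul_I]

lemma epn_mod (p m : ℕ) (hp : p ≠ 0) : epn p m = epn p (m % p) := by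
  conv_lhs => rw [← Nat.div_add_mod m p]
  rw [epn_add, epn_mul_p p _ hp, one_mul]

lemma ep_eq (p : ℕ) (x : ZMod p) : ep p x = epn p x.val := rfl

lemma ep_add (p : ℕ) [NeZero p] (x y : ZMod p) : ep p (x + y) = ep p x * ep p y := by
  have hp : p ≠ 0 := NeZero.ne p
  rw [ep_eq, ep_eq, ep_eq, ZMod.val_add, ← epn_mod p _ hp, epn_add]

lemma ep_zero (p : ℕ) : ep p 0 = 1 := by
  simp [ep]

lemma abs_ep (p : ℕ) (x : ZMod p) : ‖ep p x‖ = 1 := by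
  rw [ep]
  have : (-2 * Real.pi * Complex.I * (x.val : ℂ) / p) = ((-2 * Real.pi * x.val / p : ℝ) : ℂ) * Complex.I := by
    push_cast; ring
  rw [this, Complex.norm_exp_ofReal_mul_I]

lemma ep_ne_zero (p : ℕ) (x : ZMod p) : ep p x ≠ 0 := Complex.exp_ne_zero _

lemma conj_ep (p : ℕ) [NeZero p] (x : ZMod p) :
    (starRingEnd ℂ) (ep p x) = ep p (-x) := by
  have h1 : ep p x * ep p (-x) = 1 := by
    rw [← ep_add]; simp [ep_zero]
  have h2 : ep p x * (starRingEnd ℂ) (ep p x) = 1 := by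
    rw [Complex.mul_conj, Complex.normSq_eq_norm_sq, abs_ep]
    norm_num
  exact mul_left_cancel₀ (ep_ne_zero p x) (h2.trans h1.symm)

lemma ep_ne_one (p : ℕ) [NeZero p] {b : ZMod p} (hb : b ≠ 0) : ep p b ≠ 1 := by
  intro h
  rw [ep, Complex.exp_eq_one_iff] at h
  obtain ⟨n, hn⟩ := h
  have hpc : (p : ℂ) ≠ 0 := Nat.cast_ne_zero.mpr (NeZero.ne p)
  have hI : (Complex.I : ℂ) ≠ 0 := Complex.I_ne_zero
  have hπ : (Real.pi : ℂ) ≠ 0 := Complex.ofReal_ne_zero.mpr Real.pi_ne_zero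
  rw [div_eq_iff hpc] at hn
  have key : (2 * (Real.pi:ℂ) * Complex.I) * ((b.val : ℂ) + n * p) = 0 := by
    linear_combination -hn
  have h0 : ((b.val : ℂ) + n * p) = 0 := by
    rcases mul_eq_zero.mp key with h | h
    · exact absurd h (by simp [hπ, hI])
    · exact h
  have hval' : (b.val : ℤ) = -n * p := by
    have hZ : ((b.val : ℤ) + n * p : ℤ) = 0 := by exact_mod_cast h0
    linarith
  have hdvd : (p : ℤ) ∣ (b.val : ℤ) := ⟨-n, by linarith [hval']⟩
  have hdvd' : p ∣ b.val := Int.ofNat_dvd.mp (by exact_mod_cast hdvd)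
  have hlt : b.val < p := ZMod.val_lt b
  have hpos : 0 < b.val := by
    rcases Nat.eq_zero_or_pos b.val with h0 | h0
    · exact absurd ((ZMod.val_eq_zero b).mp h0) hb
    · exact h0
  exact absurd (Nat.le_of_dvd hpos hdvd') (not_le.mpr hlt)

lemma sum_ep_linear (p : ℕ) [NeZero p] {b : ZMod p} (hb : b ≠ 0) :
    ∑ y : ZMod p, ep p (b * y) = 0 := by
  have key : ep p b * (∑ y : ZMod p, ep p (b * y)) = ∑ y : ZMod p, ep p (b * y) := by
    rw [Finset.mul_sum]
    calc ∑ y : ZMod p, ep p b * ep p (b * y)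
        = ∑ y : ZMod p, ep p (b * (1 + y)) := by
          refine Finset.sum_congr rfl fun y _ => ?_
          rw [← ep_add]
          congr 1
          ring
      _ = ∑ y : ZMod p, ep p (b * y) :=
          Fintype.sum_equiv (Equiv.addLeft (1 : ZMod p)) _ _ (fun y => rfl)
  have hfac : (ep p b - 1) * (∑ y : ZMod p, ep p (b * y)) = 0 := by
    linear_combination key
  rcases mul_eq_zero.mp hfac with h | h
  · exact absurd (sub_eq_zero.mp h) (ep_ne_one p hb)
  · exact h

lemma gauss_mul_conj (p : ℕ) [Fact p.Prime] (hodd : Odd p) {a : ZMod p} (ha : a ≠ 0)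
    (b : ZMod p) :
    (∑ y : ZMod p, ep p (a * y ^ 2 + b * y)) *
      (starRingEnd ℂ) (∑ y : ZMod p, ep p (a * y ^ 2 + b * y)) = (p : ℂ) := by
  have h2 : (2 : ZMod p) ≠ 0 := by
    intro h
    have : (p : ℕ) ∣ 2 := by
      have : ((2 : ℕ) : ZMod p) = 0 := by exact_mod_cast h
      exact (ZMod.natCast_eq_zero_iff 2 p).mp this
    have hp2 : p = 2 := (Nat.prime_dvd_prime_iff_eq Fact.out Nat.prime_two).mp this
    rw [hp2] at hodd
    simp [Nat.odd_iff] at hodd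
  calc (∑ y : ZMod p, ep p (a * y ^ 2 + b * y)) *
      (starRingEnd ℂ) (∑ y : ZMod p, ep p (a * y ^ 2 + b * y))
      = ∑ z : ZMod p, ∑ y : ZMod p,
          ep p (a * y ^ 2 + b * y) * ep p (-(a * z ^ 2 + b * z)) := by
        rw [map_sum, Finset.sum_mul_sum]
        rw [Finset.sum_comm]
        refine Finset.sum_congr rfl fun z _ => Finset.sum_congr rfl fun y _ => ?_
        rw [conj_ep]
    _ = ∑ z : ZMod p, ∑ h : ZMod p, ep p (a * h ^ 2 + b * h) * ep p ((2 * a * h) * z) := by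
        refine Finset.sum_congr rfl fun z _ => ?_
        calc ∑ y : ZMod p, ep p (a * y ^ 2 + b * y) * ep p (-(a * z ^ 2 + b * z))
            = ∑ h : ZMod p, ep p (a * (z + h) ^ 2 + b * (z + h)) * ep p (-(a * z ^ 2 + b * z)) :=
              (Fintype.sum_equiv (Equiv.addLeft z) _ _ (fun h => rfl)).symm
          _ = ∑ h : ZMod p, ep p (a * h ^ 2 + b * h) * ep p ((2 * a * h) * z) := by
              refine Finset.sum_congr rfl fun h _ => ?_
              rw [← ep_add, ← ep_add]
              congr 1
              ring
    _ = ∑ h : ZMod p, (∑ z : ZMod p, ep p ((2 * a * h) * z)) * ep p (a * h ^ 2 + b * h) := by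
        rw [Finset.sum_comm]
        refine Finset.sum_congr rfl fun h _ => ?_
        rw [Finset.sum_mul]
        exact Finset.sum_congr rfl fun z _ => mul_comm _ _
    _ = (p : ℂ) := by
        rw [Finset.sum_eq_single 0]
        · simp [ep_zero, ZMod.card]
        · intro h _ hh
          have : (2 * a * h) ≠ 0 := by
            simp only [mul_ne_zero_iff]
            exact ⟨⟨h2, ha⟩, hh⟩
          rw [sum_ep_linear p this, zero_mul]
        · intro habs
          exact absurd (Finset.mem_univ 0) habs

lemma abs_Kker (p : ℕ) [Fact p.Prime] (hodd : Odd p) {a : ZMod p} (ha : a ≠ 0) (b : ZMod p) :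
    ‖Kker p a b‖ = (p : ℝ) ^ (-(1/2) : ℝ) := by
  have hp0 : (0:ℝ) < p := by exact_mod_cast (Fact.out : p.Prime).pos
  have hsq : (‖Kker p a b‖) ^ 2 = (p:ℝ)⁻¹ := by
    have h1 : Kker p a b * (starRingEnd ℂ) (Kker p a b) = ((p:ℝ)⁻¹ : ℂ) := by
      rw [Kker, map_mul, map_inv₀, map_natCast]
      rw [mul_mul_mul_comm, gauss_mul_conj p hodd ha b]
      rw [← mul_inv]
      push_cast
      field_simp
    have h2 : ((‖Kker p a b‖) ^ 2 : ℂ) = ((p:ℝ)⁻¹ : ℂ) := by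
      rw [← h1, Complex.mul_conj, Complex.normSq_eq_norm_sq]
      push_cast
      ring
    exact_mod_cast h2
  have habs : ‖Kker p a b‖ = Real.sqrt ((p:ℝ)⁻¹) := by
    rw [← hsq, Real.sqrt_sq (norm_nonneg _)]
  rw [habs, Real.sqrt_inv, Real.sqrt_eq_rpow, ← Real.rpow_neg_one, ← Real.rpow_mul hp0.le]
  norm_num

lemma Kker_zero_ne (p : ℕ) [NeZero p] {b : ZMod p} (hb : b ≠ 0) : Kker p 0 b = 0 := by
  rw [Kker]
  have : ∑ y : ZMod p, ep p (0 * y ^ 2 + b * y) = 0 := by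
    rw [← sum_ep_linear p hb]
    exact Finset.sum_congr rfl fun y _ => by ring_nf
  rw [this, mul_zero]

lemma Kker_zero_zero (p : ℕ) [NeZero p] : Kker p 0 0 = 1 := by
  have hp : (p : ℂ) ≠ 0 := Nat.cast_ne_zero.mpr (NeZero.ne p)
  rw [Kker]
  have : ∀ y : ZMod p, ep p (0 * y ^ 2 + 0 * y) = 1 := fun y => by
    simpa using ep_zero p
  simp only [this]
  simp [ZMod.card, hp]

noncomputable def trm (p : ℕ) [NeZero p] (f₁ f₂ : ZMod p → ℂ) (s n : ZMod p) : ℂ :=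
  if n = s then 0 else f₁ (s - n) * f₂ n * Kker p (s - n) n

noncomputable def Acal (p : ℕ) [NeZero p] (f₁ : ZMod p → ℂ) (n₁ n₂ : ZMod p) : ℂ :=
  ∑ s : ZMod p, (if n₁ = s then 0 else
    f₁ (s - n₁) * (starRingEnd ℂ) (f₁ (s - n₂)) * Kker p (s - n₁) n₁ *
      (starRingEnd ℂ) (Kker p (s - n₂) n₂))

lemma Tbil_eq_sum (p : ℕ) [NeZero p] (f₁ f₂ : ZMod p → ℂ) (s : ZMod p) :
    Tbil p f₁ f₂ s = ∑ n : ZMod p, trm p f₁ f₂ s n := by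
  rw [Tbil, Finset.sum_filter]
  refine Finset.sum_congr rfl fun n _ => ?_
  by_cases h : n = s <;> simp [trm, h]

lemma sum3_comm {α M : Type*} [Fintype α] [AddCommMonoid M] (g : α → α → α → M) :
    ∑ a : α, ∑ b : α, ∑ c : α, g a b c = ∑ b : α, ∑ c : α, ∑ a : α, g a b c := by
  calc ∑ a : α, ∑ b : α, ∑ c : α, g a b c
      = ∑ b : α, ∑ a : α, ∑ c : α, g a b c := Finset.sum_comm
    _ = ∑ b : α, ∑ c : α, ∑ a : α, g a b c :=
        Finset.sum_congr rfl fun b _ => Finset.sum_comm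

lemma sum4_comm {α M : Type*} [Fintype α] [AddCommMonoid M] (g : α → α → α → α → M) :
    ∑ a : α, ∑ b : α, ∑ c : α, ∑ d : α, g a b c d
      = ∑ c : α, ∑ d : α, ∑ b : α, ∑ a : α, g a b c d := by
  calc ∑ a : α, ∑ b : α, ∑ c : α, ∑ d : α, g a b c d
      = ∑ a : α, ∑ c : α, ∑ d : α, ∑ b : α, g a b c d :=
        Finset.sum_congr rfl fun a _ => sum3_comm _
    _ = ∑ c : α, ∑ d : α, ∑ a : α, ∑ b : α, g a b c d := sum3_comm _
    _ = ∑ c : α, ∑ d : α, ∑ b : α, ∑ a : α, g a b c d :=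
        Finset.sum_congr rfl fun c _ => Finset.sum_congr rfl fun d _ => Finset.sum_comm

lemma real_cs {ι : Type*} (s : Finset ι) (u v : ι → ℝ) :
    ∑ i ∈ s, u i * v i ≤ Real.sqrt (∑ i ∈ s, u i ^ 2) * Real.sqrt (∑ i ∈ s, v i ^ 2) := by
  have h := Finset.sum_mul_sq_le_sq_mul_sq s u v
  calc ∑ i ∈ s, u i * v i ≤ |∑ i ∈ s, u i * v i| := le_abs_self _
    _ = Real.sqrt ((∑ i ∈ s, u i * v i) ^ 2) := (Real.sqrt_sq_eq_abs _).symm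
    _ ≤ Real.sqrt ((∑ i ∈ s, u i ^ 2) * ∑ i ∈ s, v i ^ 2) := Real.sqrt_le_sqrt h
    _ = _ := Real.sqrt_mul (Finset.sum_nonneg fun i _ => sq_nonneg _) _

lemma S_decomp (p : ℕ) [NeZero p] (f₁ f₂ : ZMod p → ℂ) :
    ∑ s : ZMod p, Tbil p f₁ f₂ s * (starRingEnd ℂ) (Tbil p f₁ f₂ s)
      = (∑ n₁ : ZMod p, ∑ n₂ : ZMod p, f₂ n₁ * (starRingEnd ℂ) (f₂ n₂) * Acal p f₁ n₁ n₂)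
        - ∑ n₁ : ZMod p, ∑ n₂ : ZMod p,
            trm p f₁ f₂ n₂ n₁ * (starRingEnd ℂ) (f₁ 0 * f₂ n₂ * Kker p 0 n₂) := by
  calc ∑ s : ZMod p, Tbil p f₁ f₂ s * (starRingEnd ℂ) (Tbil p f₁ f₂ s)
      = ∑ s : ZMod p, ∑ n₁ : ZMod p, ∑ n₂ : ZMod p,
          trm p f₁ f₂ s n₁ * (starRingEnd ℂ) (trm p f₁ f₂ s n₂) := by
        refine Finset.sum_congr rfl fun s _ => ?_
        rw [Tbil_eq_sum, map_sum, Finset.sum_mul_sum]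
    _ = ∑ n₁ : ZMod p, ∑ n₂ : ZMod p, ∑ s : ZMod p,
          trm p f₁ f₂ s n₁ * (starRingEnd ℂ) (trm p f₁ f₂ s n₂) := sum3_comm _
    _ = _ := by
        rw [← Finset.sum_sub_distrib]
        refine Finset.sum_congr rfl fun n₁ _ => ?_
        rw [← Finset.sum_sub_distrib]
        refine Finset.sum_congr rfl fun n₂ _ => ?_
        have point : ∀ s : ZMod p, trm p f₁ f₂ s n₁ * (starRingEnd ℂ) (trm p f₁ f₂ s n₂)
            = (f₂ n₁ * (starRingEnd ℂ) (f₂ n₂) * (if n₁ = s then 0 else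
                f₁ (s - n₁) * (starRingEnd ℂ) (f₁ (s - n₂)) * Kker p (s - n₁) n₁ *
                  (starRingEnd ℂ) (Kker p (s - n₂) n₂)))
              - (if n₂ = s then
                  trm p f₁ f₂ s n₁ *
                    (starRingEnd ℂ) (f₁ (s - n₂) * f₂ n₂ * Kker p (s - n₂) n₂) else 0) := by
          intro s
          by_cases h2 : n₂ = s
          · by_cases h1 : n₁ = s
            · simp [trm, h1, h2]
            · simp only [trm, if_pos h2, if_neg h1, map_zero, mul_zero, map_mul]
              ring
          · by_cases h1 : n₁ = s
            · simp [trm, h1, h2]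
            · simp only [trm, if_neg h1, if_neg h2, map_mul]
              ring
        rw [Finset.sum_congr rfl fun s _ => point s, Finset.sum_sub_distrib]
        congr 1
        · rw [← Finset.mul_sum, Acal]
        · rw [Finset.sum_ite_eq]
          simp

lemma Lambda_eq (p : ℕ) [NeZero p] (f₁ : ZMod p → ℂ) :
    ∑ n₁ : ZMod p, ∑ n₂ : ZMod p, Acal p f₁ n₁ n₂ * (starRingEnd ℂ) (Acal p f₁ n₁ n₂)
      = Lambda1 p f₁ := by
  have expand : ∀ n₁ n₂ : ZMod p, Acal p f₁ n₁ n₂ * (starRingEnd ℂ) (Acal p f₁ n₁ n₂)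
      = ∑ s₁ : ZMod p, ∑ s₂ : ZMod p,
          (if n₁ = s₁ then 0 else
            f₁ (s₁ - n₁) * (starRingEnd ℂ) (f₁ (s₁ - n₂)) * Kker p (s₁ - n₁) n₁ *
              (starRingEnd ℂ) (Kker p (s₁ - n₂) n₂)) *
          (starRingEnd ℂ) (if n₁ = s₂ then 0 else
            f₁ (s₂ - n₁) * (starRingEnd ℂ) (f₁ (s₂ - n₂)) * Kker p (s₂ - n₁) n₁ *
              (starRingEnd ℂ) (Kker p (s₂ - n₂) n₂)) := by
    intro n₁ n₂
    rw [Acal, map_sum, Finset.sum_mul_sum]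
  calc ∑ n₁ : ZMod p, ∑ n₂ : ZMod p, Acal p f₁ n₁ n₂ * (starRingEnd ℂ) (Acal p f₁ n₁ n₂)
      = ∑ n₁ : ZMod p, ∑ n₂ : ZMod p, ∑ s₁ : ZMod p, ∑ s₂ : ZMod p,
          (if n₁ = s₁ then 0 else
            f₁ (s₁ - n₁) * (starRingEnd ℂ) (f₁ (s₁ - n₂)) * Kker p (s₁ - n₁) n₁ *
              (starRingEnd ℂ) (Kker p (s₁ - n₂) n₂)) *
          (starRingEnd ℂ) (if n₁ = s₂ then 0 else
            f₁ (s₂ - n₁) * (starRingEnd ℂ) (f₁ (s₂ - n₂)) * Kker p (s₂ - n₁) n₁ *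
              (starRingEnd ℂ) (Kker p (s₂ - n₂) n₂)) := by
        exact Finset.sum_congr rfl fun n₁ _ => Finset.sum_congr rfl fun n₂ _ => expand n₁ n₂
    _ = Lambda1 p f₁ := by
        rw [sum4_comm]
        rw [Lambda1]
        refine Finset.sum_congr rfl fun s₁ _ => Finset.sum_congr rfl fun s₂ _ =>
          Finset.sum_congr rfl fun n₂ _ => ?_
        rw [Finset.sum_filter]
        refine Finset.sum_congr rfl fun n₁ _ => ?_
        by_cases h1 : n₁ = s₁
        · simp [h1]
        · by_cases h2 : n₁ = s₂
          · simp [h2]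
          · rw [if_neg h1, if_neg h2, if_pos ⟨h1, h2⟩]
            simp only [map_mul, Complex.conj_conj]
            ring

lemma nsq_nonneg (p : ℕ) [NeZero p] (f : ZMod p → ℂ) : 0 ≤ nsq p f :=
  Finset.sum_nonneg fun _ _ => sq_nonneg _

lemma abs_le_sqrt_nsq (p : ℕ) [NeZero p] (f : ZMod p → ℂ) (x : ZMod p) :
    ‖f x‖ ≤ Real.sqrt (nsq p f) := by
  have h : ‖f x‖ ^ 2 ≤ nsq p f :=
    Finset.single_le_sum (f := fun y => ‖f y‖ ^ 2)
      (fun y _ => sq_nonneg _) (Finset.mem_univ x)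
  calc ‖f x‖ = Real.sqrt (‖f x‖ ^ 2) :=
        (Real.sqrt_sq (norm_nonneg _)).symm
    _ ≤ Real.sqrt (nsq p f) := Real.sqrt_le_sqrt h

lemma sum_abs_sub_sq (p : ℕ) [NeZero p] (f : ZMod p → ℂ) :
    ∑ n : ZMod p, ‖f (0 - n)‖ ^ 2 = nsq p f := by
  rw [nsq]
  exact Fintype.sum_equiv (Equiv.neg (ZMod p)) _ _ (fun n => by rw [zero_sub]; rfl)

lemma M_bound (p : ℕ) [NeZero p] (f₁ f₂ : ZMod p → ℂ) :
    ‖∑ n₁ : ZMod p, ∑ n₂ : ZMod p,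
        f₂ n₁ * (starRingEnd ℂ) (f₂ n₂) * Acal p f₁ n₁ n₂‖
      ≤ nsq p f₂ * Real.sqrt (‖Lambda1 p f₁‖) := by
  have step1 : ‖∑ n₁ : ZMod p, ∑ n₂ : ZMod p,
        f₂ n₁ * (starRingEnd ℂ) (f₂ n₂) * Acal p f₁ n₁ n₂‖
      ≤ ∑ n₁ : ZMod p, ∑ n₂ : ZMod p,
          (‖f₂ n₁‖ * ‖f₂ n₂‖) * ‖Acal p f₁ n₁ n₂‖ := by
    refine (norm_sum_le _ _).trans ?_
    refine Finset.sum_le_sum fun n₁ _ => ?_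
    refine (norm_sum_le _ _).trans ?_
    refine Finset.sum_le_sum fun n₂ _ => le_of_eq ?_
    rw [norm_mul, norm_mul, Complex.norm_conj]
  have flat : ∑ n₁ : ZMod p, ∑ n₂ : ZMod p,
        (‖f₂ n₁‖ * ‖f₂ n₂‖) * ‖Acal p f₁ n₁ n₂‖
      = ∑ q : ZMod p × ZMod p,
          (‖f₂ q.1‖ * ‖f₂ q.2‖) * ‖Acal p f₁ q.1 q.2‖ :=
    (Fintype.sum_prod_type (fun q : ZMod p × ZMod p =>
      (‖f₂ q.1‖ * ‖f₂ q.2‖) * ‖Acal p f₁ q.1 q.2‖)).symm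
  have hu2 : ∑ q : ZMod p × ZMod p, (‖f₂ q.1‖ * ‖f₂ q.2‖) ^ 2
      = nsq p f₂ * nsq p f₂ := by
    rw [Fintype.sum_prod_type]
    rw [nsq, Finset.sum_mul_sum]
    refine Finset.sum_congr rfl fun a _ => Finset.sum_congr rfl fun b _ => ?_
    ring
  have hv2c : ((∑ q : ZMod p × ZMod p, ‖Acal p f₁ q.1 q.2‖ ^ 2 : ℝ) : ℂ)
      = Lambda1 p f₁ := by
    rw [← Lambda_eq p f₁]
    push_cast
    rw [Fintype.sum_prod_type]
    refine Finset.sum_congr rfl fun n₁ _ => Finset.sum_congr rfl fun n₂ _ => ?_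
    rw [Complex.mul_conj, Complex.normSq_eq_norm_sq]
    push_cast
    ring
  have hv2 : ∑ q : ZMod p × ZMod p, ‖Acal p f₁ q.1 q.2‖ ^ 2
      = ‖Lambda1 p f₁‖ := by
    rw [← hv2c, Complex.norm_real, Real.norm_eq_abs]
    exact (_root_.abs_of_nonneg (Finset.sum_nonneg fun _ _ => sq_nonneg _)).symm
  calc ‖∑ n₁ : ZMod p, ∑ n₂ : ZMod p,
        f₂ n₁ * (starRingEnd ℂ) (f₂ n₂) * Acal p f₁ n₁ n₂‖
      ≤ ∑ q : ZMod p × ZMod p,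
          (‖f₂ q.1‖ * ‖f₂ q.2‖) * ‖Acal p f₁ q.1 q.2‖ := by
        rw [← flat]; exact step1
    _ ≤ Real.sqrt (∑ q : ZMod p × ZMod p, (‖f₂ q.1‖ * ‖f₂ q.2‖) ^ 2) *
          Real.sqrt (∑ q : ZMod p × ZMod p, ‖Acal p f₁ q.1 q.2‖ ^ 2) :=
        real_cs _ _ _
    _ = nsq p f₂ * Real.sqrt (‖Lambda1 p f₁‖) := by
        rw [hu2, hv2, Real.sqrt_mul_self (nsq_nonneg p f₂)]

lemma C_bound (p : ℕ) [Fact p.Prime] (hodd : Odd p) (f₁ f₂ : ZMod p → ℂ) :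
    ‖∑ n₁ : ZMod p, ∑ n₂ : ZMod p,
        trm p f₁ f₂ n₂ n₁ * (starRingEnd ℂ) (f₁ 0 * f₂ n₂ * Kker p 0 n₂)‖
      ≤ (p : ℝ) ^ (-(1/2) : ℝ) * nsq p f₁ * nsq p f₂ := by
  set c : ℝ := (p : ℝ) ^ (-(1/2) : ℝ) with hc
  have hc0 : 0 ≤ c := Real.rpow_nonneg (Nat.cast_nonneg p) _
  have step1 : ‖∑ n₁ : ZMod p, ∑ n₂ : ZMod p,
        trm p f₁ f₂ n₂ n₁ * (starRingEnd ℂ) (f₁ 0 * f₂ n₂ * Kker p 0 n₂)‖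
      ≤ ∑ n₁ : ZMod p, ∑ n₂ : ZMod p,
          ‖trm p f₁ f₂ n₂ n₁‖ *
            (‖f₁ 0‖ * ‖f₂ n₂‖ * ‖Kker p 0 n₂‖) := by
    refine (norm_sum_le _ _).trans ?_
    refine Finset.sum_le_sum fun n₁ _ => ?_
    refine (norm_sum_le _ _).trans ?_
    refine Finset.sum_le_sum fun n₂ _ => le_of_eq ?_
    rw [norm_mul, Complex.norm_conj, norm_mul, norm_mul]
  have step2 : ∀ n₁ n₂ : ZMod p,
      ‖trm p f₁ f₂ n₂ n₁‖ *
          (‖f₁ 0‖ * ‖f₂ n₂‖ * ‖Kker p 0 n₂‖)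
        ≤ if n₂ = 0 then
            (‖f₁ (0 - n₁)‖ * ‖f₂ n₁‖ * c) *
              (‖f₁ 0‖ * ‖f₂ 0‖) else 0 := by
    intro n₁ n₂
    by_cases hn2 : n₂ = 0
    · subst hn2
      rw [if_pos rfl]
      have hK : ‖Kker p 0 0‖ = 1 := by rw [Kker_zero_zero]; simp
      rw [hK, mul_one]
      have h1 : ‖trm p f₁ f₂ 0 n₁‖
          ≤ ‖f₁ (0 - n₁)‖ * ‖f₂ n₁‖ * c := by
        by_cases hn1 : n₁ = 0
        · subst hn1
          rw [trm, if_pos rfl, norm_zero]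
          positivity
        · rw [trm, if_neg hn1, norm_mul, norm_mul]
          have hne : (0 : ZMod p) - n₁ ≠ 0 := by
            rw [zero_sub, neg_ne_zero]; exact hn1
          rw [abs_Kker p hodd hne n₁, ← hc]
      have h2 : (0:ℝ) ≤ ‖f₁ 0‖ * ‖f₂ 0‖ := by positivity
      exact mul_le_mul_of_nonneg_right h1 h2
    · rw [if_neg hn2, Kker_zero_ne p hn2]
      simp
  have step3 : ∀ n₁ : ZMod p,
      (∑ n₂ : ZMod p, if n₂ = 0 then
          (‖f₁ (0 - n₁)‖ * ‖f₂ n₁‖ * c) *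
            (‖f₁ 0‖ * ‖f₂ 0‖) else 0)
        = (‖f₁ (0 - n₁)‖ * ‖f₂ n₁‖) *
            (c * ‖f₁ 0‖ * ‖f₂ 0‖) := by
    intro n₁
    rw [Finset.sum_ite_eq' Finset.univ (0 : ZMod p)]
    simp only [Finset.mem_univ, if_true]
    ring
  have step4 : ∑ n₁ : ZMod p, ‖f₁ (0 - n₁)‖ * ‖f₂ n₁‖
      ≤ Real.sqrt (nsq p f₁) * Real.sqrt (nsq p f₂) := by
    refine (real_cs Finset.univ _ _).trans ?_
    rw [sum_abs_sub_sq p f₁]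
    rw [nsq]
    exact le_rfl
  calc ‖∑ n₁ : ZMod p, ∑ n₂ : ZMod p,
        trm p f₁ f₂ n₂ n₁ * (starRingEnd ℂ) (f₁ 0 * f₂ n₂ * Kker p 0 n₂)‖
      ≤ ∑ n₁ : ZMod p, ∑ n₂ : ZMod p,
          ‖trm p f₁ f₂ n₂ n₁‖ *
            (‖f₁ 0‖ * ‖f₂ n₂‖ * ‖Kker p 0 n₂‖) := step1
    _ ≤ ∑ n₁ : ZMod p, (‖f₁ (0 - n₁)‖ * ‖f₂ n₁‖) *
            (c * ‖f₁ 0‖ * ‖f₂ 0‖) := by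
        refine Finset.sum_le_sum fun n₁ _ => ?_
        refine le_of_le_of_eq (Finset.sum_le_sum fun n₂ _ => step2 n₁ n₂) (step3 n₁)
    _ = (∑ n₁ : ZMod p, ‖f₁ (0 - n₁)‖ * ‖f₂ n₁‖) *
            (c * ‖f₁ 0‖ * ‖f₂ 0‖) := by
        rw [← Finset.sum_mul]
    _ ≤ (Real.sqrt (nsq p f₁) * Real.sqrt (nsq p f₂)) *
            (c * ‖f₁ 0‖ * ‖f₂ 0‖) := by
        refine mul_le_mul_of_nonneg_right step4 ?_
        positivity
    _ ≤ c * nsq p f₁ * nsq p f₂ := by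
        have h10 := abs_le_sqrt_nsq p f₁ 0
        have h20 := abs_le_sqrt_nsq p f₂ 0
        have hs1 : Real.sqrt (nsq p f₁) * Real.sqrt (nsq p f₁) = nsq p f₁ :=
          Real.mul_self_sqrt (nsq_nonneg p f₁)
        have hs2 : Real.sqrt (nsq p f₂) * Real.sqrt (nsq p f₂) = nsq p f₂ :=
          Real.mul_self_sqrt (nsq_nonneg p f₂)
        have ha2 : (0:ℝ) ≤ ‖f₂ 0‖ := norm_nonneg _
        have hq1 : (0:ℝ) ≤ Real.sqrt (nsq p f₁) := Real.sqrt_nonneg _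
        have hab : ‖f₁ 0‖ * ‖f₂ 0‖
            ≤ Real.sqrt (nsq p f₁) * Real.sqrt (nsq p f₂) := mul_le_mul h10 h20 ha2 hq1
        calc Real.sqrt (nsq p f₁) * Real.sqrt (nsq p f₂) *
              (c * ‖f₁ 0‖ * ‖f₂ 0‖)
            = c * (Real.sqrt (nsq p f₁) * Real.sqrt (nsq p f₂)) *
                (‖f₁ 0‖ * ‖f₂ 0‖) := by ring
          _ ≤ c * (Real.sqrt (nsq p f₁) * Real.sqrt (nsq p f₂)) *
                (Real.sqrt (nsq p f₁) * Real.sqrt (nsq p f₂)) := by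
              refine mul_le_mul_of_nonneg_left hab ?_
              positivity
          _ = c * (Real.sqrt (nsq p f₁) * Real.sqrt (nsq p f₁)) *
                (Real.sqrt (nsq p f₂) * Real.sqrt (nsq p f₂)) := by ring
          _ = c * nsq p f₁ * nsq p f₂ := by rw [hs1, hs2]

theorem T_norm_sq_bound (p : ℕ) [Fact p.Prime] (hodd : Odd p) (f₁ f₂ : ZMod p → ℂ) :
    ∑ s : ZMod p, ‖Tbil p f₁ f₂ s‖ ^ 2 ≤
      (p : ℝ) ^ (-(1/2) : ℝ) * nsq p f₁ * nsq p f₂ +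
        nsq p f₂ * Real.sqrt (‖Lambda1 p f₁‖) := by
  have hcast : ((∑ s : ZMod p, ‖Tbil p f₁ f₂ s‖ ^ 2 : ℝ) : ℂ)
      = ∑ s : ZMod p, Tbil p f₁ f₂ s * (starRingEnd ℂ) (Tbil p f₁ f₂ s) := by
    push_cast
    refine Finset.sum_congr rfl fun s _ => ?_
    rw [Complex.mul_conj, Complex.normSq_eq_norm_sq]
    push_cast
    ring
  have hLHS : ∑ s : ZMod p, ‖Tbil p f₁ f₂ s‖ ^ 2
      = ‖∑ s : ZMod p, Tbil p f₁ f₂ s * (starRingEnd ℂ) (Tbil p f₁ f₂ s)‖ := by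
    rw [← hcast, Complex.norm_real, Real.norm_eq_abs]
    exact (_root_.abs_of_nonneg (Finset.sum_nonneg fun _ _ => sq_nonneg _)).symm
  rw [hLHS, S_decomp p f₁ f₂]
  have htri : ‖(∑ n₁ : ZMod p, ∑ n₂ : ZMod p,
        f₂ n₁ * (starRingEnd ℂ) (f₂ n₂) * Acal p f₁ n₁ n₂)
      - ∑ n₁ : ZMod p, ∑ n₂ : ZMod p,
          trm p f₁ f₂ n₂ n₁ * (starRingEnd ℂ) (f₁ 0 * f₂ n₂ * Kker p 0 n₂)‖
      ≤ ‖∑ n₁ : ZMod p, ∑ n₂ : ZMod p,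
          f₂ n₁ * (starRingEnd ℂ) (f₂ n₂) * Acal p f₁ n₁ n₂‖
        + ‖∑ n₁ : ZMod p, ∑ n₂ : ZMod p,
            trm p f₁ f₂ n₂ n₁ * (starRingEnd ℂ) (f₁ 0 * f₂ n₂ * Kker p 0 n₂)‖ := by
    rw [sub_eq_add_neg]
    refine (norm_add_le _ _).trans ?_
    rw [norm_neg]
  refine htri.trans ?_
  rw [add_comm]
  exact add_le_add (C_bound p hodd f₁ f₂) (M_bound p f₁ f₂)
end

section
/- Let p be a prime, f : F_p → ℂ, and K₂ : F_p³ → ℂ a kernel with |K₂(u₁,u₂,u₃)| ≤ C p^{-5/2} for all (u₁,u₂,u₃) with (u₁−u₂)u₃ ≠ 0. Then |∑_{(u₁−u₂)u₃ ≠ 0} f(u₁) conj(f(u₂)) conj(f(u₁+u₃)) f(u₂+u₃) K₂(u₁,u₂,u₃)| ≤ C p^{-3/2} ‖f‖₂⁴. -/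
open Finset Complex

theorem K2_kernel_bound (p : ℕ) (hp : p.Prime) :
    ∀ (f : ZMod p → ℂ) (K₂ : ZMod p → ZMod p → ZMod p → ℂ) (C : ℝ),
    (∀ u₁ u₂ u₃ : ZMod p, (u₁ - u₂) * u₃ ≠ 0 →
      ‖K₂ u₁ u₂ u₃‖ ≤ C * (p : ℝ) ^ (-(5/2) : ℝ)) →
    haveI : NeZero p := ⟨hp.ne_zero⟩
    ‖∑ u ∈ Finset.univ.filter
        (fun u : (ZMod p × ZMod p) × ZMod p => (u.1.1 - u.1.2) * u.2 ≠ 0),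
        f u.1.1 * (starRingEnd ℂ) (f u.1.2) * (starRingEnd ℂ) (f (u.1.1 + u.2)) *
          f (u.1.2 + u.2) * K₂ u.1.1 u.1.2 u.2‖
      ≤ C * (p : ℝ) ^ (-(3/2) : ℝ) * nsq p f ^ 2 := by
  intro f K₂ C hK
  haveI : NeZero p := ⟨hp.ne_zero⟩
  haveI : Fact p.Prime := ⟨hp⟩
  have hp0 : (0:ℝ) < p := by exact_mod_cast hp.pos
  set B : ℝ := C * (p : ℝ) ^ (-(5/2) : ℝ) with hB
  -- B ≥ 0
  have hone : ((1:ZMod p) - 0) * 1 ≠ 0 := by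
    simp [one_ne_zero]
  have hB0 : 0 ≤ B := le_trans (norm_nonneg _) (hK 1 0 1 hone)
  set g : (ZMod p × ZMod p) × ZMod p → ℝ := fun u =>
    ‖f u.1.1‖ * ‖f u.1.2‖ *
      ‖f (u.1.1 + u.2)‖ * ‖f (u.1.2 + u.2)‖ with hg
  have hgnn : ∀ u, 0 ≤ g u := fun u => by positivity
  have step1 : ‖∑ u ∈ Finset.univ.filter
        (fun u : (ZMod p × ZMod p) × ZMod p => (u.1.1 - u.1.2) * u.2 ≠ 0),
        f u.1.1 * (starRingEnd ℂ) (f u.1.2) * (starRingEnd ℂ) (f (u.1.1 + u.2)) *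
          f (u.1.2 + u.2) * K₂ u.1.1 u.1.2 u.2‖
      ≤ ∑ u : (ZMod p × ZMod p) × ZMod p, g u * B := by
    calc ‖_‖ ≤ ∑ u ∈ Finset.univ.filter
          (fun u : (ZMod p × ZMod p) × ZMod p => (u.1.1 - u.1.2) * u.2 ≠ 0),
          ‖f u.1.1 * (starRingEnd ℂ) (f u.1.2) *
            (starRingEnd ℂ) (f (u.1.1 + u.2)) * f (u.1.2 + u.2) * K₂ u.1.1 u.1.2 u.2‖ :=
        norm_sum_le _ _
      _ ≤ ∑ u ∈ Finset.univ.filter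
          (fun u : (ZMod p × ZMod p) × ZMod p => (u.1.1 - u.1.2) * u.2 ≠ 0), g u * B := by
        refine Finset.sum_le_sum (fun u hu => ?_)
        simp only [map_mul, norm_mul, Complex.norm_conj, hg]
        exact mul_le_mul_of_nonneg_left (hK u.1.1 u.1.2 u.2 (by simpa using hu))
          (by positivity)
      _ ≤ ∑ u : (ZMod p × ZMod p) × ZMod p, g u * B :=
        Finset.sum_le_sum_of_subset_of_nonneg (Finset.filter_subset _ _)
          (fun u _ _ => mul_nonneg (hgnn u) hB0)
  -- factor the full sum
  have hsq : ∀ u₃ : ZMod p, (∑ x : ZMod p, ‖f x‖ * ‖f (x + u₃)‖) ^ 2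
      ≤ nsq p f ^ 2 := by
    intro u₃
    have htrans : ∑ x : ZMod p, ‖f (x + u₃)‖ ^ 2 = nsq p f := by
      exact Fintype.sum_bijective (fun x => x + u₃)
        (Equiv.addRight u₃).bijective _ _ (fun x => rfl)
    calc (∑ x : ZMod p, ‖f x‖ * ‖f (x + u₃)‖) ^ 2
        ≤ (∑ x : ZMod p, ‖f x‖ ^ 2) *
          (∑ x : ZMod p, ‖f (x + u₃)‖ ^ 2) :=
          Finset.sum_mul_sq_le_sq_mul_sq _ _ _
      _ = nsq p f ^ 2 := by rw [htrans, nsq, sq]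
  have step2 : ∑ u : (ZMod p × ZMod p) × ZMod p, g u ≤ p * nsq p f ^ 2 := by
    have hfact : ∑ u : (ZMod p × ZMod p) × ZMod p, g u
        = ∑ u₃ : ZMod p, (∑ x : ZMod p, ‖f x‖ * ‖f (x + u₃)‖) ^ 2 := by
      rw [Fintype.sum_prod_type]
      rw [Finset.sum_comm]
      refine Finset.sum_congr rfl (fun u₃ _ => ?_)
      rw [Fintype.sum_prod_type, sq, Finset.sum_mul_sum]
      refine Finset.sum_congr rfl (fun u₁ _ => Finset.sum_congr rfl (fun u₂ _ => ?_))
      simp only [hg]; ring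
    rw [hfact]
    calc ∑ u₃ : ZMod p, (∑ x : ZMod p, ‖f x‖ * ‖f (x + u₃)‖) ^ 2
        ≤ ∑ _u₃ : ZMod p, nsq p f ^ 2 := Finset.sum_le_sum (fun u₃ _ => hsq u₃)
      _ = p * nsq p f ^ 2 := by simp [mul_comm]
  have hpow : B * ((p : ℝ) * nsq p f ^ 2) = C * (p : ℝ) ^ (-(3/2) : ℝ) * nsq p f ^ 2 := by
    rw [hB]
    have : (p : ℝ) ^ (-(5/2) : ℝ) * (p : ℝ) = (p : ℝ) ^ (-(3/2) : ℝ) := by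
      nth_rewrite 2 [← Real.rpow_one (p:ℝ)]
      rw [← Real.rpow_add hp0]
      norm_num
    rw [← this]; ring
  calc ‖_‖ ≤ ∑ u : (ZMod p × ZMod p) × ZMod p, g u * B := step1
    _ = (∑ u : (ZMod p × ZMod p) × ZMod p, g u) * B := by rw [Finset.sum_mul]
    _ ≤ (p * nsq p f ^ 2) * B := mul_le_mul_of_nonneg_right step2 hB0
    _ = C * (p : ℝ) ^ (-(3/2) : ℝ) * nsq p f ^ 2 := by rw [mul_comm, hpow]
end
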